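/- Let A : H → H be a compact operator and x ∈ H with A^n x ≠ 0 for all n ≥ 0. If the normalized sequence {A^n x/‖A^n x‖}_{n≥0} is a Bessel sequence in H, then ‖A^n x‖ → 0 as n → ∞. Consequently, if there exists C > 0 with ‖A^n x‖ ≥ C for all n, then {A^n x/‖A^n x‖} is not a Bessel sequence. -/

import Mathlib

open scoped ComplexInnerProductSpace ENNReal
open Filter Topology

noncomputable section

variable {E : Type*} [NormedAddCommGroup E] [InnerProductSpace ℂ E]

/-- `y` is a Bessel sequence with Bessel bound `B`:
`∑ᵢ |⟪z, yᵢ⟫|² ≤ B‖z‖²` for all `z` (sum taken in `ℝ≥0∞` so that divergence is handled). -/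
def BesselWith {ι : Type*} (y : ι → E) (B : ℝ) : Prop :=
  ∀ z : E, ∑' i, ENNReal.ofReal (‖⟪z, y i⟫‖ ^ 2) ≤ ENNReal.ofReal (B * ‖z‖ ^ 2)

/-- `y` satisfies the lower frame condition with bound `A`:
`A‖z‖² ≤ ∑ᵢ |⟪z, yᵢ⟫|²` for all `z`. -/
def LowerFrameWith {ι : Type*} (y : ι → E) (A : ℝ) : Prop :=
  ∀ z : E, ENNReal.ofReal (A * ‖z‖ ^ 2) ≤ ∑' i, ENNReal.ofReal (‖⟪z, y i⟫‖ ^ 2)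

/-- `y` is a frame with frame bounds `A ≤ B`. -/
def FrameWith {ι : Type*} (y : ι → E) (A B : ℝ) : Prop :=
  0 < A ∧ A ≤ B ∧ LowerFrameWith y A ∧ BesselWith y B

/-- The normalized sequence `yᵢ/‖yᵢ‖`. -/
def normalizeSeq {ι : Type*} (y : ι → E) : ι → E := fun i => (‖y i‖ : ℂ)⁻¹ • y i

theorem compact_weak_zero {H : Type*} [NormedAddCommGroup H] [InnerProductSpace ℂ H]
    [CompleteSpace H] (A : H →L[ℂ] H) (hcomp : IsCompactOperator ⇑A)
    (u : ℕ → H) (hb : ∀ n, ‖u n‖ ≤ 1)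
    (hw : ∀ z : H, Tendsto (fun n => ⟪z, u n⟫) atTop (𝓝 0)) :
    Tendsto (fun n => A (u n)) atTop (𝓝 (0 : H)) := by
  obtain ⟨K, hK, hAK⟩ := hcomp
  obtain ⟨ε, hε, hball⟩ := Metric.mem_nhds_iff.mp hAK
  set c : ℝ := ε / 2 with hcdef
  have hc : 0 < c := half_pos hε
  have hmem : ∀ n, A ((c : ℂ) • u n) ∈ K := by
    intro n
    apply hball
    rw [Metric.mem_ball, dist_zero_right, norm_smul]
    have : ‖(c : ℂ)‖ = c := by
      simp [Complex.norm_real, abs_of_pos hc]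
    rw [this]
    calc c * ‖u n‖ ≤ c * 1 := by
          exact mul_le_mul_of_nonneg_left (hb n) hc.le
      _ = c := mul_one c
      _ < ε := by linarith
  refine tendsto_of_subseq_tendsto fun ns hns => ?_
  obtain ⟨p, hpK, φ, hφ, hlim⟩ := hK.tendsto_subseq (fun k => hmem (ns k))
  have hsmul : ∀ m, A ((c : ℂ) • u m) = (c : ℂ) • A (u m) := fun m => A.map_smul _ _
  have hcne : (c : ℂ) ≠ 0 := by
    exact_mod_cast hc.ne'
  have hlim2 : Tendsto (fun k => A (u (ns (φ k)))) atTop (𝓝 ((c : ℂ)⁻¹ • p)) := by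
    have := hlim.const_smul ((c : ℂ)⁻¹)
    refine this.congr fun k => ?_
    simp only [Function.comp_apply, hsmul, smul_smul, inv_mul_cancel₀ hcne, one_smul]
  have hq0 : (c : ℂ)⁻¹ • p = 0 := by
    have hz : ∀ z : H, ⟪z, ((c : ℂ)⁻¹ • p)⟫ = 0 := by
      intro z
      have h1 : Tendsto (fun k => ⟪z, A (u (ns (φ k)))⟫) atTop (𝓝 ⟪z, ((c : ℂ)⁻¹ • p)⟫) :=
        (continuous_inner.comp (continuous_const.prodMk
          (by fun_prop : Continuous fun w : H => w))).continuousAt.tendsto.comp hlim2 |>.congr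
          (fun k => rfl)
      have h2 : Tendsto (fun k => ⟪z, A (u (ns (φ k)))⟫) atTop (𝓝 0) := by
        have h3 : Tendsto (fun k => ⟪(ContinuousLinearMap.adjoint A) z, u (ns (φ k))⟫)
            atTop (𝓝 0) :=
          (hw _).comp (hns.comp hφ.tendsto_atTop)
        refine h3.congr fun k => ?_
        rw [ContinuousLinearMap.adjoint_inner_left]
      exact tendsto_nhds_unique h1 h2
    have := hz ((c : ℂ)⁻¹ • p)
    rwa [inner_self_eq_zero] at this
  exact ⟨φ, hq0 ▸ hlim2⟩


/-- For a compact operator `A` and `x` with all `Aⁿx ≠ 0`: if the normalized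
orbit `{Aⁿx/‖Aⁿx‖}` is a Bessel sequence then `‖Aⁿx‖ → 0`; consequently, if `‖Aⁿx‖ ≥ C > 0`
for all `n`, the normalized orbit is not a Bessel sequence. -/
theorem stmt19 {H : Type*} [NormedAddCommGroup H] [InnerProductSpace ℂ H] [CompleteSpace H]
    (A : H →L[ℂ] H) (hcomp : IsCompactOperator ⇑A)
    (x : H) (hnz : ∀ n : ℕ, (A ^ n) x ≠ 0) :
    ((∃ B : ℝ, BesselWith (normalizeSeq (fun n : ℕ => (A ^ n) x)) B) →
      Tendsto (fun n : ℕ => ‖(A ^ n) x‖) atTop (𝓝 0)) ∧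
    (∀ C : ℝ, 0 < C → (∀ n : ℕ, C ≤ ‖(A ^ n) x‖) →
      ¬ ∃ B : ℝ, BesselWith (normalizeSeq (fun n : ℕ => (A ^ n) x)) B) := by

  have main : (∃ B : ℝ, BesselWith (normalizeSeq (fun n : ℕ => (A ^ n) x)) B) →
      Tendsto (fun n : ℕ => ‖(A ^ n) x‖) atTop (𝓝 0) := by
    rintro ⟨B, hB⟩
    set y : ℕ → H := fun n => (A ^ n) x with hy
    set e : ℕ → H := normalizeSeq y with he
    have hpos : ∀ n, 0 < ‖y n‖ := fun n => norm_pos_iff.mpr (hnz n)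
    have hb : ∀ n, ‖e n‖ ≤ 1 := by
      intro n
      rw [he]
      simp only [normalizeSeq, norm_smul, norm_inv, Complex.norm_real, Real.norm_eq_abs,
        abs_of_nonneg (norm_nonneg _)]
      rw [inv_mul_cancel₀ (hpos n).ne']
    have hw : ∀ z : H, Tendsto (fun n => ⟪z, e n⟫) atTop (𝓝 0) := by
      intro z
      have hne : ∑' n, ENNReal.ofReal (‖⟪z, e n⟫‖ ^ 2) ≠ ⊤ :=
        (lt_of_le_of_lt (hB z) ENNReal.ofReal_lt_top).ne
      have h0 := ENNReal.tendsto_atTop_zero_of_tsum_ne_top hne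
      have h1 : Tendsto (fun n => ‖⟪z, e n⟫‖ ^ 2) atTop (𝓝 0) := by
        have h2 := (ENNReal.tendsto_toReal (by simp : (0:ℝ≥0∞) ≠ ⊤)).comp h0
        simp only [ENNReal.toReal_zero] at h2
        refine h2.congr fun n => ?_
        simp [ENNReal.toReal_ofReal (sq_nonneg _)]
      have h3 : Tendsto (fun n => ‖⟪z, e n⟫‖) atTop (𝓝 0) := by
        have := (Real.continuous_sqrt.tendsto 0).comp h1
        simpa [Real.sqrt_sq (norm_nonneg _)] using this.congr fun n => by
          simp [Real.sqrt_sq (norm_nonneg _)]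
      exact tendsto_zero_iff_norm_tendsto_zero.mpr h3
    have hAe0 : Tendsto (fun n => A (e n)) atTop (𝓝 (0 : H)) :=
      compact_weak_zero A hcomp e hb hw
    have hnorm : Tendsto (fun n : ℕ => ‖A (e n)‖) atTop (𝓝 0) :=
      tendsto_zero_iff_norm_tendsto_zero.mp hAe0
    have hAe : ∀ n, ‖A (e n)‖ = ‖y n‖⁻¹ * ‖y (n + 1)‖ := by
      intro n
      have h1 : A (y n) = y (n + 1) := by
        simp only [hy, pow_succ', ContinuousLinearMap.mul_apply]
      simp [he, normalizeSeq, map_smul, norm_smul, h1]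
    have hev : ∀ᶠ n in atTop, ‖y (n + 1)‖ ≤ (1/2 : ℝ) * ‖y n‖ := by
      have := hnorm.eventually (gt_mem_nhds (by norm_num : (0:ℝ) < 1/2))
      filter_upwards [this] with n hn
      rw [hAe n] at hn
      calc ‖y (n+1)‖ = ‖y n‖ * (‖y n‖⁻¹ * ‖y (n+1)‖) := by
            rw [← mul_assoc, mul_inv_cancel₀ (hpos n).ne', one_mul]
        _ ≤ ‖y n‖ * (1/2) := mul_le_mul_of_nonneg_left hn.le (hpos n).le
        _ = (1/2) * ‖y n‖ := mul_comm _ _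
    have hsum : Summable y := by
      refine summable_of_ratio_norm_eventually_le (by norm_num : (1/2:ℝ) < 1) ?_
      filter_upwards [hev] with n hn
      simpa using hn
    have h0 := hsum.tendsto_atTop_zero
    have h5 := (continuous_norm.tendsto (0:H)).comp h0
    rw [norm_zero] at h5
    exact h5
  refine ⟨main, fun C hC hCle hBes => ?_⟩
  have h0 := main hBes
  have : C ≤ 0 := ge_of_tendsto h0 (Eventually.of_forall hCle)
  linarith
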